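/- For every ε₃ ∈ (0,1], μ ∈ (0,1], and x ∈ ℝ^n, the truncation error of the Hessian satisfies ‖∇²f(x;μ) − ∇²f̃(x;μ)‖ ≤ 4ε₃/5, where the norm is the operator norm induced by the Euclidean norm on ℝ^n. -/

import Mathlib

open Real Filter

noncomputable section

variable {n m : ℕ}

/-- `g_i(x;μ) = √(‖x − c_i‖² + μ²)`. -/
def sebG (c : Fin m → EuclideanSpace ℝ (Fin n)) (μ : ℝ) (x : EuclideanSpace ℝ (Fin n))
    (i : Fin m) : ℝ :=
  Real.sqrt (‖x - c i‖ ^ 2 + μ ^ 2)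

/-- `f_i(x;μ) = g_i(x;μ) + r_i`. -/
def sebFi (c : Fin m → EuclideanSpace ℝ (Fin n)) (r : Fin m → ℝ) (μ : ℝ)
    (x : EuclideanSpace ℝ (Fin n)) (i : Fin m) : ℝ :=
  sebG c μ x i + r i

/-- the log-exponential aggregation function `f(x;μ) = μ ln(Σ_i exp(f_i(x;μ)/μ))`. -/
def sebFmu (c : Fin m → EuclideanSpace ℝ (Fin n)) (r : Fin m → ℝ) (μ : ℝ)
    (x : EuclideanSpace ℝ (Fin n)) : ℝ :=
  μ * Real.log (∑ i : Fin m, Real.exp (sebFi c r μ x i / μ))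

/-- `f(x) = max_i (‖x − c_i‖ + r_i)`. -/
def sebF (c : Fin m → EuclideanSpace ℝ (Fin n)) (r : Fin m → ℝ)
    (x : EuclideanSpace ℝ (Fin n)) : ℝ :=
  ⨆ i : Fin m, (‖x - c i‖ + r i)

/-- `f_∞(x;μ) = max_i f_i(x;μ)`. -/
def sebFinf (c : Fin m → EuclideanSpace ℝ (Fin n)) (r : Fin m → ℝ) (μ : ℝ)
    (x : EuclideanSpace ℝ (Fin n)) : ℝ :=
  ⨆ i : Fin m, sebFi c r μ x i

/-- `λ_i(x;μ)`. -/
def sebLam (c : Fin m → EuclideanSpace ℝ (Fin n)) (r : Fin m → ℝ) (μ : ℝ)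
    (x : EuclideanSpace ℝ (Fin n)) (i : Fin m) : ℝ :=
  Real.exp (sebFi c r μ x i / μ) / ∑ j : Fin m, Real.exp (sebFi c r μ x j / μ)

/-- `∇f_i(x;μ) = (x − c_i)/g_i(x;μ)`. -/
def sebGradI (c : Fin m → EuclideanSpace ℝ (Fin n)) (μ : ℝ)
    (x : EuclideanSpace ℝ (Fin n)) (i : Fin m) : EuclideanSpace ℝ (Fin n) :=
  (sebG c μ x i)⁻¹ • (x - c i)

/-- `∇f(x;μ) = Σ_i λ_i(x;μ) ∇f_i(x;μ)`. -/
def sebGrad (c : Fin m → EuclideanSpace ℝ (Fin n)) (r : Fin m → ℝ) (μ : ℝ)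
    (x : EuclideanSpace ℝ (Fin n)) : EuclideanSpace ℝ (Fin n) :=
  ∑ i : Fin m, sebLam c r μ x i • sebGradI c μ x i

/-- `S(x;μ,ε) = {i : λ_i(x;μ) ≥ ε}`. -/
def sebS (c : Fin m → EuclideanSpace ℝ (Fin n)) (r : Fin m → ℝ) (μ ε : ℝ)
    (x : EuclideanSpace ℝ (Fin n)) : Finset (Fin m) :=
  Finset.univ.filter (fun i => ε ≤ sebLam c r μ x i)

/-- `λ̃_i(x;μ)`. -/
def sebLamT (c : Fin m → EuclideanSpace ℝ (Fin n)) (r : Fin m → ℝ) (μ ε : ℝ)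
    (x : EuclideanSpace ℝ (Fin n)) (i : Fin m) : ℝ :=
  Real.exp (sebFi c r μ x i / μ) / ∑ j ∈ sebS c r μ ε x, Real.exp (sebFi c r μ x j / μ)

/-- the truncated log-exponential function `f̃(x;μ)`. -/
def sebFmuT (c : Fin m → EuclideanSpace ℝ (Fin n)) (r : Fin m → ℝ) (μ ε : ℝ)
    (x : EuclideanSpace ℝ (Fin n)) : ℝ :=
  μ * Real.log (∑ i ∈ sebS c r μ ε x, Real.exp (sebFi c r μ x i / μ))

/-- `∇f̃(x;μ) = Σ_{i∈S} λ̃_i(x;μ) ∇f_i(x;μ)`. -/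
def sebGradT (c : Fin m → EuclideanSpace ℝ (Fin n)) (r : Fin m → ℝ) (μ ε : ℝ)
    (x : EuclideanSpace ℝ (Fin n)) : EuclideanSpace ℝ (Fin n) :=
  ∑ i ∈ sebS c r μ ε x, sebLamT c r μ ε x i • sebGradI c μ x i

/-- `∇²f_i(x;μ) = (1/g_i) I_n − (x−c_i)(x−c_i)ᵀ/g_i³` as an `n×n` matrix. -/
def sebHessI (c : Fin m → EuclideanSpace ℝ (Fin n)) (μ : ℝ)
    (x : EuclideanSpace ℝ (Fin n)) (i : Fin m) : Matrix (Fin n) (Fin n) ℝ :=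
  (sebG c μ x i)⁻¹ • (1 : Matrix (Fin n) (Fin n) ℝ)
    - ((sebG c μ x i) ^ 3)⁻¹ •
        Matrix.vecMulVec (fun j => (x - c i) j) (fun j => (x - c i) j)

/-- `∇²f(x;μ)` as an `n×n` matrix. -/
def sebHess (c : Fin m → EuclideanSpace ℝ (Fin n)) (r : Fin m → ℝ) (μ : ℝ)
    (x : EuclideanSpace ℝ (Fin n)) : Matrix (Fin n) (Fin n) ℝ :=
  (∑ i : Fin m, (sebLam c r μ x i • sebHessI c μ x i
      + (μ⁻¹ * sebLam c r μ x i) •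
          Matrix.vecMulVec (fun j => sebGradI c μ x i j) (fun j => sebGradI c μ x i j)))
    - μ⁻¹ • Matrix.vecMulVec (fun j => sebGrad c r μ x j) (fun j => sebGrad c r μ x j)

/-- `∇²f̃(x;μ)` as an `n×n` matrix. -/
def sebHessT (c : Fin m → EuclideanSpace ℝ (Fin n)) (r : Fin m → ℝ) (μ ε : ℝ)
    (x : EuclideanSpace ℝ (Fin n)) : Matrix (Fin n) (Fin n) ℝ :=
  (∑ i ∈ sebS c r μ ε x, (sebLamT c r μ ε x i • sebHessI c μ x i
      + (μ⁻¹ * sebLamT c r μ ε x i) •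
          Matrix.vecMulVec (fun j => sebGradI c μ x i j) (fun j => sebGradI c μ x i j)))
    - μ⁻¹ • Matrix.vecMulVec (fun j => sebGradT c r μ ε x j) (fun j => sebGradT c r μ ε x j)

end

noncomputable section SebAux
open scoped Matrix.Norms.L2Operator
variable {n m : ℕ}

lemma sebG_pos (c : Fin m → EuclideanSpace ℝ (Fin n)) {μ : ℝ} (hμ : 0 < μ)
    (x : EuclideanSpace ℝ (Fin n)) (i : Fin m) : 0 < sebG c μ x i :=
  Real.sqrt_pos.2 (by positivity)

lemma norm_le_sebG (c : Fin m → EuclideanSpace ℝ (Fin n)) (μ : ℝ)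
    (x : EuclideanSpace ℝ (Fin n)) (i : Fin m) : ‖x - c i‖ ≤ sebG c μ x i := by
  have h1 : Real.sqrt (‖x - c i‖ ^ 2) ≤ Real.sqrt (‖x - c i‖ ^ 2 + μ ^ 2) :=
    Real.sqrt_le_sqrt (le_add_of_nonneg_right (sq_nonneg μ))
  rwa [Real.sqrt_sq (norm_nonneg _)] at h1

lemma mu_le_sebG (c : Fin m → EuclideanSpace ℝ (Fin n)) {μ : ℝ} (hμ : 0 ≤ μ)
    (x : EuclideanSpace ℝ (Fin n)) (i : Fin m) : μ ≤ sebG c μ x i := by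
  have h1 : Real.sqrt (μ ^ 2) ≤ Real.sqrt (‖x - c i‖ ^ 2 + μ ^ 2) :=
    Real.sqrt_le_sqrt (le_add_of_nonneg_left (sq_nonneg _))
  rwa [Real.sqrt_sq hμ] at h1

lemma sebGradI_norm_le (c : Fin m → EuclideanSpace ℝ (Fin n)) {μ : ℝ} (hμ : 0 < μ)
    (x : EuclideanSpace ℝ (Fin n)) (i : Fin m) : ‖sebGradI c μ x i‖ ≤ 1 := by
  rw [sebGradI, norm_smul, Real.norm_eq_abs,
    abs_of_nonneg (inv_nonneg.2 (sebG_pos c hμ x i).le)]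
  rw [inv_mul_le_iff₀ (sebG_pos c hμ x i), mul_one]
  exact norm_le_sebG c μ x i

lemma toCLM_vecMulVec_apply (a b y : EuclideanSpace ℝ (Fin n)) :
    (Matrix.toEuclideanCLM (𝕜 := ℝ) (Matrix.vecMulVec (fun j => a j) (fun j => b j))) y
      = (inner ℝ b y : ℝ) • a := by
  ext j
  have h0 : (Matrix.toEuclideanCLM (𝕜 := ℝ) (Matrix.vecMulVec (fun j => a j) (fun j => b j))) y j
      = (Matrix.vecMulVec (fun j => a j) (fun j => b j)).mulVec (fun j => y j) j := rfl
  rw [h0]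
  simp [Matrix.vecMulVec, Matrix.mulVec, dotProduct,
    PiLp.inner_apply, RCLike.inner_apply, conj_trivial, Finset.sum_mul, mul_comm,
    mul_assoc, mul_left_comm]
  rw [Finset.mul_sum]

lemma vecMulVec_l2norm_le (a b : EuclideanSpace ℝ (Fin n)) :
    ‖Matrix.vecMulVec (fun j => a j) (fun j => b j)‖ ≤ ‖a‖ * ‖b‖ := by
  rw [Matrix.cstar_norm_def]
  apply ContinuousLinearMap.opNorm_le_bound _ (mul_nonneg (norm_nonneg a) (norm_nonneg b))
  intro y
  rw [toCLM_vecMulVec_apply, norm_smul]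
  have := abs_real_inner_le_norm b y
  calc ‖(inner ℝ b y : ℝ)‖ * ‖a‖ ≤ (‖b‖ * ‖y‖) * ‖a‖ := by
        apply mul_le_mul_of_nonneg_right _ (norm_nonneg a)
        rwa [Real.norm_eq_abs]
    _ = ‖a‖ * ‖b‖ * ‖y‖ := by ring

lemma sebHessI_l2norm_le (c : Fin m → EuclideanSpace ℝ (Fin n)) {μ : ℝ} (hμ : 0 < μ)
    (x : EuclideanSpace ℝ (Fin n)) (i : Fin m) :
    ‖sebHessI c μ x i‖ ≤ (sebG c μ x i)⁻¹ := by
  set g := sebG c μ x i with hgdef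
  have hg : 0 < g := sebG_pos c hμ x i
  set v := x - c i with hvdef
  have hv : ‖v‖ ≤ g := norm_le_sebG c μ x i
  rw [Matrix.cstar_norm_def]
  apply ContinuousLinearMap.opNorm_le_bound _ (inv_nonneg.2 hg.le)
  intro y
  have happ : (Matrix.toEuclideanCLM (𝕜 := ℝ) (sebHessI c μ x i)) y
      = g⁻¹ • y - ((g ^ 3)⁻¹ * (inner ℝ v y : ℝ)) • v := by
    simp only [sebHessI, ← hgdef, ← hvdef, map_sub, map_smul, map_one]
    simp only [ContinuousLinearMap.sub_apply, ContinuousLinearMap.smul_apply,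
      ContinuousLinearMap.one_apply]
    rw [toCLM_vecMulVec_apply, smul_smul]
  rw [happ]
  set t : ℝ := inner ℝ v y with htdef
  have hsq : ‖g⁻¹ • y - ((g ^ 3)⁻¹ * t) • v‖ ^ 2 ≤ (g⁻¹ * ‖y‖) ^ 2 := by
    have hexp : ‖g⁻¹ • y - ((g ^ 3)⁻¹ * t) • v‖ ^ 2
        = (g⁻¹ * ‖y‖) ^ 2 - 2 * (g⁻¹ * ((g ^ 3)⁻¹ * t) * t) + ((g ^ 3)⁻¹ * t) ^ 2 * ‖v‖ ^ 2 := by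
      have hc : (inner ℝ y v : ℝ) = t := by rw [htdef, real_inner_comm]
      rw [norm_sub_sq_real, norm_smul, norm_smul, real_inner_smul_left, real_inner_smul_right, hc]
      simp only [Real.norm_eq_abs]
      rw [abs_of_nonneg (inv_nonneg.2 hg.le), mul_pow, mul_pow, sq_abs]
      ring
    rw [hexp]
    have hvg : ‖v‖ ^ 2 ≤ g ^ 2 := by nlinarith [norm_nonneg v]
    have h1 : ((g ^ 3)⁻¹ * t) ^ 2 * ‖v‖ ^ 2 ≤ ((g ^ 3)⁻¹ * t) ^ 2 * g ^ 2 :=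
      mul_le_mul_of_nonneg_left hvg (sq_nonneg _)
    have h2 : ((g ^ 3)⁻¹ * t) ^ 2 * g ^ 2 = g⁻¹ * (g ^ 3)⁻¹ * t ^ 2 := by
      field_simp
    nlinarith [mul_nonneg (mul_nonneg (inv_nonneg.2 hg.le)
      (inv_nonneg.2 (by positivity : (0:ℝ) ≤ g ^ 3))) (sq_nonneg t)]
  nlinarith [norm_nonneg (g⁻¹ • y - ((g ^ 3)⁻¹ * t) • v),
    mul_nonneg (inv_nonneg.2 hg.le) (norm_nonneg y)]

lemma vecMulVec_sub_split (a b : EuclideanSpace ℝ (Fin n)) :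
    Matrix.vecMulVec (fun j => a j) (fun j => a j)
      - Matrix.vecMulVec (fun j => b j) (fun j => b j)
    = Matrix.vecMulVec (fun j => a j) (fun j => (a - b) j)
      + Matrix.vecMulVec (fun j => (a - b) j) (fun j => b j) := by
  ext i j
  have hs : ∀ k, (a - b) k = a k - b k := fun k => rfl
  simp only [Matrix.vecMulVec_apply, Matrix.sub_apply, Matrix.add_apply, hs]
  ring

end SebAux

noncomputable section SebMain
open scoped Matrix.Norms.L2Operator

set_option maxHeartbeats 2000000 in
lemma seb_hess_trunc_bound (n m : ℕ) (hm : 1 ≤ m) (c : Fin m → EuclideanSpace ℝ (Fin n))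
    (r : Fin m → ℝ) (ε₃ μ : ℝ)
    (hε₃ : 0 < ε₃) (hε₃1 : ε₃ ≤ 1) (hμ : 0 < μ) (hμ1 : μ ≤ 1)
    (x : EuclideanSpace ℝ (Fin n)) :
    ‖Matrix.toEuclideanCLM (𝕜 := ℝ)
        (sebHess c r μ x - sebHessT c r μ (μ * ε₃ / (10 * m)) x)‖ ≤ 4 * ε₃ / 5 := by
  rw [← Matrix.cstar_norm_def]
  have hm' : (0:ℝ) < m := by exact_mod_cast hm
  set ε : ℝ := μ * ε₃ / (10 * (m:ℝ)) with hεdef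
  have hεpos : 0 < ε := by positivity
  set S := sebS c r μ ε x with hSdef
  have hEpos : ∀ i : Fin m, 0 < Real.exp (sebFi c r μ x i / μ) := fun i => Real.exp_pos _
  have hne : (Finset.univ : Finset (Fin m)).Nonempty := ⟨⟨0, hm⟩, Finset.mem_univ _⟩
  have hTpos : 0 < ∑ j, Real.exp (sebFi c r μ x j / μ) :=
    Finset.sum_pos (fun i _ => hEpos i) hne
  have hlamnn : ∀ i, 0 ≤ sebLam c r μ x i := fun i => div_nonneg (Real.exp_pos _).le hTpos.le
  have hsum1 : ∑ i, sebLam c r μ x i = 1 := by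
    simp only [sebLam]
    rw [← Finset.sum_div, div_self hTpos.ne']
  have hScond : ∀ i : Fin m, i ∈ S ↔ ε ≤ sebLam c r μ x i := by
    intro i
    rw [hSdef, sebS, Finset.mem_filter]
    simp
  obtain ⟨i₀, hi₀⟩ : ∃ i, 1 / (m:ℝ) ≤ sebLam c r μ x i := by
    by_contra h
    push_neg at h
    have hlt := Finset.sum_lt_sum_of_nonempty hne (fun i _ => h i)
    rw [hsum1, Finset.sum_const, Finset.card_univ, Fintype.card_fin, nsmul_eq_mul,
      mul_one_div, div_self hm'.ne'] at hlt
    exact lt_irrefl _ hlt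
  have hε_le : ε ≤ 1 / (m:ℝ) := by
    rw [hεdef, div_le_div_iff₀ (by positivity) hm']
    have h1 : μ * ε₃ ≤ 1 := mul_le_one₀ hμ1 hε₃.le hε₃1
    nlinarith
  have hSne : S.Nonempty := ⟨i₀, (hScond i₀).2 (le_trans hε_le hi₀)⟩
  have hTSpos : 0 < ∑ j ∈ S, Real.exp (sebFi c r μ x j / μ) :=
    Finset.sum_pos (fun i _ => hEpos i) hSne
  have hTSle : (∑ j ∈ S, Real.exp (sebFi c r μ x j / μ))
      ≤ ∑ j, Real.exp (sebFi c r μ x j / μ) :=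
    Finset.sum_le_sum_of_subset_of_nonneg (Finset.subset_univ S) (fun i _ _ => (hEpos i).le)
  have hlamT_eq : ∀ i, sebLamT c r μ ε x i
      = Real.exp (sebFi c r μ x i / μ) / ∑ j ∈ S, Real.exp (sebFi c r μ x j / μ) :=
    fun i => rfl
  have hlam_eq : ∀ i, sebLam c r μ x i
      = Real.exp (sebFi c r μ x i / μ) / ∑ j, Real.exp (sebFi c r μ x j / μ) := fun i => rfl
  have hlamTnn : ∀ i, 0 ≤ sebLamT c r μ ε x i := fun i => by
    rw [hlamT_eq]
    positivity
  have hmono : ∀ i, sebLam c r μ x i ≤ sebLamT c r μ ε x i := by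
    intro i
    rw [hlam_eq, hlamT_eq]
    exact div_le_div_of_nonneg_left (hEpos i).le hTSpos hTSle
  set lam' : Fin m → ℝ := fun i => if i ∈ S then sebLamT c r μ ε x i else 0 with hlam'def
  set D : ℝ := ∑ i ∈ Finset.univ \ S, sebLam c r μ x i with hDdef
  have hTSsum : ∑ i ∈ S, sebLamT c r μ ε x i = 1 := by
    simp only [hlamT_eq]
    rw [← Finset.sum_div, div_self hTSpos.ne']
  have hSsum : ∑ i ∈ S, sebLam c r μ x i
      = (∑ j ∈ S, Real.exp (sebFi c r μ x j / μ)) / (∑ j, Real.exp (sebFi c r μ x j / μ)) := by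
    simp only [hlam_eq]
    rw [← Finset.sum_div]
  have hDeq : D = 1 - (∑ j ∈ S, Real.exp (sebFi c r μ x j / μ))
      / (∑ j, Real.exp (sebFi c r μ x j / μ)) := by
    have h := Finset.sum_sdiff (f := fun i => sebLam c r μ x i) (Finset.subset_univ S)
    rw [hsum1, hSsum] at h
    rw [hDdef]
    linarith
  have hDnn : 0 ≤ D := Finset.sum_nonneg fun i _ => hlamnn i
  have hDle : D ≤ μ * ε₃ / 10 := by
    have hcard : D ≤ (Finset.univ \ S).card • ε := by
      rw [hDdef]
      apply Finset.sum_le_card_nsmul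
      intro i hi
      have hiS : i ∉ S := (Finset.mem_sdiff.1 hi).2
      by_contra hc
      push_neg at hc
      exact hiS ((hScond i).2 hc.le)
    have hc2 : (((Finset.univ \ S).card : ℕ) : ℝ) ≤ (m : ℝ) := by
      have := Finset.card_le_card (Finset.subset_univ (Finset.univ \ S))
      rw [Finset.card_univ, Fintype.card_fin] at this
      exact_mod_cast this
    rw [nsmul_eq_mul] at hcard
    have : D ≤ (m : ℝ) * ε := hcard.trans (mul_le_mul_of_nonneg_right hc2 hεpos.le)
    rw [hεdef] at this
    calc D ≤ (m : ℝ) * (μ * ε₃ / (10 * (m:ℝ))) := this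
      _ = μ * ε₃ / 10 := by
          field_simp
  have hdelta_eq : ∑ i, |sebLam c r μ x i - lam' i| = 2 * D := by
    rw [← Finset.sum_sdiff (Finset.subset_univ S)]
    have e1 : ∑ i ∈ Finset.univ \ S, |sebLam c r μ x i - lam' i| = D := by
      rw [hDdef]
      apply Finset.sum_congr rfl
      intro i hi
      have hiS : i ∉ S := (Finset.mem_sdiff.1 hi).2
      simp [hlam'def, hiS, abs_of_nonneg (hlamnn i)]
    have e2 : ∑ i ∈ S, |sebLam c r μ x i - lam' i| = D := by
      have hcong : ∀ i ∈ S, |sebLam c r μ x i - lam' i|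
          = sebLamT c r μ ε x i - sebLam c r μ x i := by
        intro i hi
        simp only [hlam'def, if_pos hi]
        rw [abs_sub_comm, abs_of_nonneg (sub_nonneg.2 (hmono i))]
      rw [Finset.sum_congr rfl hcong, Finset.sum_sub_distrib, hTSsum, hSsum, hDeq]
    rw [e1, e2]
    ring
  -- matrix identities
  have hGt_eq : sebGradT c r μ ε x = ∑ i, lam' i • sebGradI c μ x i := by
    have h1 : sebGradT c r μ ε x = ∑ i ∈ S, sebLamT c r μ ε x i • sebGradI c μ x i := rfl
    have h2 : ∀ i ∈ S, sebLamT c r μ ε x i • sebGradI c μ x i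
        = lam' i • sebGradI c μ x i := fun i hi => by simp [hlam'def, hi]
    rw [h1, Finset.sum_congr rfl h2]
    exact Finset.sum_subset (Finset.subset_univ S) fun i _ hi => by simp [hlam'def, hi]
  have hHT_eq : sebHessT c r μ ε x
      = (∑ i, (lam' i • sebHessI c μ x i + (μ⁻¹ * lam' i) •
          Matrix.vecMulVec (fun j => sebGradI c μ x i j) (fun j => sebGradI c μ x i j)))
        - μ⁻¹ • Matrix.vecMulVec (fun j => sebGradT c r μ ε x j)
            (fun j => sebGradT c r μ ε x j) := by
    have h1 : sebHessT c r μ ε x = (∑ i ∈ S, (sebLamT c r μ ε x i • sebHessI c μ x i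
        + (μ⁻¹ * sebLamT c r μ ε x i) •
            Matrix.vecMulVec (fun j => sebGradI c μ x i j) (fun j => sebGradI c μ x i j)))
        - μ⁻¹ • Matrix.vecMulVec (fun j => sebGradT c r μ ε x j)
            (fun j => sebGradT c r μ ε x j) := rfl
    rw [h1]
    congr 1
    have h2 : ∀ i ∈ S, (sebLamT c r μ ε x i • sebHessI c μ x i
        + (μ⁻¹ * sebLamT c r μ ε x i) •
            Matrix.vecMulVec (fun j => sebGradI c μ x i j) (fun j => sebGradI c μ x i j))
        = (lam' i • sebHessI c μ x i + (μ⁻¹ * lam' i) •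
            Matrix.vecMulVec (fun j => sebGradI c μ x i j) (fun j => sebGradI c μ x i j)) :=
      fun i hi => by simp [hlam'def, hi]
    rw [Finset.sum_congr rfl h2]
    exact Finset.sum_subset (Finset.subset_univ S) fun i _ hi => by simp [hlam'def, hi]
  have hdecomp : sebHess c r μ x - sebHessT c r μ ε x
      = (∑ i, ((sebLam c r μ x i - lam' i) • sebHessI c μ x i
          + (μ⁻¹ * (sebLam c r μ x i - lam' i)) •
            Matrix.vecMulVec (fun j => sebGradI c μ x i j) (fun j => sebGradI c μ x i j)))
        - μ⁻¹ • (Matrix.vecMulVec (fun j => sebGrad c r μ x j) (fun j => sebGrad c r μ x j)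
            - Matrix.vecMulVec (fun j => sebGradT c r μ ε x j)
                (fun j => sebGradT c r μ ε x j)) := by
    have h1 : sebHess c r μ x = (∑ i, (sebLam c r μ x i • sebHessI c μ x i
        + (μ⁻¹ * sebLam c r μ x i) •
            Matrix.vecMulVec (fun j => sebGradI c μ x i j) (fun j => sebGradI c μ x i j)))
        - μ⁻¹ • Matrix.vecMulVec (fun j => sebGrad c r μ x j)
            (fun j => sebGrad c r μ x j) := rfl
    rw [h1, hHT_eq, sub_sub_sub_comm, smul_sub]
    congr 1
    rw [← Finset.sum_sub_distrib]
    exact Finset.sum_congr rfl fun i _ => by module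
  -- norm bounds
  have hnormA : ∀ i, ‖sebHessI c μ x i‖ ≤ μ⁻¹ := fun i =>
    (sebHessI_l2norm_le c hμ x i).trans (inv_anti₀ hμ (mu_le_sebG c hμ.le x i))
  have hnormP : ∀ i, ‖Matrix.vecMulVec (fun j => sebGradI c μ x i j)
      (fun j => sebGradI c μ x i j)‖ ≤ 1 := by
    intro i
    refine (vecMulVec_l2norm_le _ _).trans ?_
    have h := sebGradI_norm_le c hμ x i
    nlinarith [norm_nonneg (sebGradI c μ x i)]
  have hterm : ∀ i ∈ (Finset.univ : Finset (Fin m)),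
      ‖(sebLam c r μ x i - lam' i) • sebHessI c μ x i
        + (μ⁻¹ * (sebLam c r μ x i - lam' i)) •
          Matrix.vecMulVec (fun j => sebGradI c μ x i j) (fun j => sebGradI c μ x i j)‖
      ≤ |sebLam c r μ x i - lam' i| * (2 * μ⁻¹) := by
    intro i _
    refine (norm_add_le _ _).trans ?_
    rw [norm_smul, norm_smul, Real.norm_eq_abs, Real.norm_eq_abs, abs_mul,
      abs_of_nonneg (inv_nonneg.2 hμ.le)]
    have h1 := hnormA i
    have h2 := hnormP i
    have h3 : (0:ℝ) ≤ |sebLam c r μ x i - lam' i| := abs_nonneg _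
    have h4 : (0:ℝ) ≤ μ⁻¹ := inv_nonneg.2 hμ.le
    nlinarith [mul_le_mul_of_nonneg_left h1 h3, mul_le_mul_of_nonneg_left h2 (mul_nonneg h4 h3)]
  have hsum_norm : ‖∑ i, ((sebLam c r μ x i - lam' i) • sebHessI c μ x i
      + (μ⁻¹ * (sebLam c r μ x i - lam' i)) •
        Matrix.vecMulVec (fun j => sebGradI c μ x i j) (fun j => sebGradI c μ x i j))‖
      ≤ (2 * D) * (2 * μ⁻¹) := by
    refine (norm_sum_le _ _).trans ?_
    refine (Finset.sum_le_sum hterm).trans ?_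
    rw [← Finset.sum_mul, hdelta_eq]
  have hGnorm : ‖sebGrad c r μ x‖ ≤ 1 := by
    have h1 : sebGrad c r μ x = ∑ i, sebLam c r μ x i • sebGradI c μ x i := rfl
    rw [h1]
    refine (norm_sum_le _ _).trans ?_
    rw [← hsum1]
    refine Finset.sum_le_sum fun i _ => ?_
    rw [norm_smul, Real.norm_eq_abs, abs_of_nonneg (hlamnn i)]
    calc sebLam c r μ x i * ‖sebGradI c μ x i‖ ≤ sebLam c r μ x i * 1 :=
          mul_le_mul_of_nonneg_left (sebGradI_norm_le c hμ x i) (hlamnn i)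
      _ = sebLam c r μ x i := mul_one _
  have hGtnorm : ‖sebGradT c r μ ε x‖ ≤ 1 := by
    have h1 : sebGradT c r μ ε x = ∑ i ∈ S, sebLamT c r μ ε x i • sebGradI c μ x i := rfl
    rw [h1]
    refine (norm_sum_le _ _).trans ?_
    rw [← hTSsum]
    refine Finset.sum_le_sum fun i _ => ?_
    rw [norm_smul, Real.norm_eq_abs, abs_of_nonneg (hlamTnn i)]
    calc sebLamT c r μ ε x i * ‖sebGradI c μ x i‖ ≤ sebLamT c r μ ε x i * 1 :=
          mul_le_mul_of_nonneg_left (sebGradI_norm_le c hμ x i) (hlamTnn i)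
      _ = sebLamT c r μ ε x i := mul_one _
  have hGdiff : ‖sebGrad c r μ x - sebGradT c r μ ε x‖ ≤ 2 * D := by
    have h1 : sebGrad c r μ x = ∑ i, sebLam c r μ x i • sebGradI c μ x i := rfl
    rw [h1, hGt_eq, ← Finset.sum_sub_distrib]
    have h2 : ∀ i ∈ (Finset.univ : Finset (Fin m)),
        sebLam c r μ x i • sebGradI c μ x i - lam' i • sebGradI c μ x i
        = (sebLam c r μ x i - lam' i) • sebGradI c μ x i := fun i _ => (sub_smul _ _ _).symm
    rw [Finset.sum_congr rfl h2]
    refine (norm_sum_le _ _).trans ?_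
    rw [← hdelta_eq]
    refine Finset.sum_le_sum fun i _ => ?_
    rw [norm_smul, Real.norm_eq_abs]
    calc |sebLam c r μ x i - lam' i| * ‖sebGradI c μ x i‖
        ≤ |sebLam c r μ x i - lam' i| * 1 :=
          mul_le_mul_of_nonneg_left (sebGradI_norm_le c hμ x i) (abs_nonneg _)
      _ = |sebLam c r μ x i - lam' i| := mul_one _
  have hQsplit : Matrix.vecMulVec (fun j => sebGrad c r μ x j) (fun j => sebGrad c r μ x j)
      - Matrix.vecMulVec (fun j => sebGradT c r μ ε x j) (fun j => sebGradT c r μ ε x j)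
      = Matrix.vecMulVec (fun j => sebGrad c r μ x j)
          (fun j => (sebGrad c r μ x - sebGradT c r μ ε x) j)
        + Matrix.vecMulVec (fun j => (sebGrad c r μ x - sebGradT c r μ ε x) j)
            (fun j => sebGradT c r μ ε x j) :=
    vecMulVec_sub_split _ _
  have hQnorm : ‖Matrix.vecMulVec (fun j => sebGrad c r μ x j) (fun j => sebGrad c r μ x j)
      - Matrix.vecMulVec (fun j => sebGradT c r μ ε x j)
          (fun j => sebGradT c r μ ε x j)‖ ≤ 4 * D := by
    rw [hQsplit]
    refine (norm_add_le _ _).trans ?_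
    have b1 := (vecMulVec_l2norm_le (sebGrad c r μ x) (sebGrad c r μ x - sebGradT c r μ ε x))
    have b2 := (vecMulVec_l2norm_le (sebGrad c r μ x - sebGradT c r μ ε x)
      (sebGradT c r μ ε x))
    have hd : (0:ℝ) ≤ ‖sebGrad c r μ x - sebGradT c r μ ε x‖ := norm_nonneg _
    have c1 : ‖sebGrad c r μ x‖ * ‖sebGrad c r μ x - sebGradT c r μ ε x‖ ≤ 2 * D := by
      calc ‖sebGrad c r μ x‖ * ‖sebGrad c r μ x - sebGradT c r μ ε x‖
          ≤ 1 * (2 * D) := mul_le_mul hGnorm hGdiff hd zero_le_one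
        _ = 2 * D := one_mul _
    have c2 : ‖sebGrad c r μ x - sebGradT c r μ ε x‖ * ‖sebGradT c r μ ε x‖ ≤ 2 * D := by
      calc ‖sebGrad c r μ x - sebGradT c r μ ε x‖ * ‖sebGradT c r μ ε x‖
          ≤ (2 * D) * 1 := mul_le_mul hGdiff hGtnorm (norm_nonneg _) (by linarith)
        _ = 2 * D := mul_one _
    linarith
  calc ‖sebHess c r μ x - sebHessT c r μ ε x‖
      = ‖(∑ i, ((sebLam c r μ x i - lam' i) • sebHessI c μ x i
          + (μ⁻¹ * (sebLam c r μ x i - lam' i)) •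
            Matrix.vecMulVec (fun j => sebGradI c μ x i j) (fun j => sebGradI c μ x i j)))
        - μ⁻¹ • (Matrix.vecMulVec (fun j => sebGrad c r μ x j) (fun j => sebGrad c r μ x j)
            - Matrix.vecMulVec (fun j => sebGradT c r μ ε x j)
                (fun j => sebGradT c r μ ε x j))‖ := by rw [hdecomp]
    _ ≤ ‖∑ i, ((sebLam c r μ x i - lam' i) • sebHessI c μ x i
          + (μ⁻¹ * (sebLam c r μ x i - lam' i)) •
            Matrix.vecMulVec (fun j => sebGradI c μ x i j) (fun j => sebGradI c μ x i j))‖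
        + ‖μ⁻¹ • (Matrix.vecMulVec (fun j => sebGrad c r μ x j) (fun j => sebGrad c r μ x j)
            - Matrix.vecMulVec (fun j => sebGradT c r μ ε x j)
                (fun j => sebGradT c r μ ε x j))‖ := norm_sub_le _ _
    _ ≤ (2 * D) * (2 * μ⁻¹) + μ⁻¹ * (4 * D) := by
        refine add_le_add hsum_norm ?_
        rw [norm_smul, Real.norm_eq_abs, abs_of_nonneg (inv_nonneg.2 hμ.le)]
        exact mul_le_mul_of_nonneg_left hQnorm (inv_nonneg.2 hμ.le)
    _ = 8 * D * μ⁻¹ := by ring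
    _ ≤ 8 * (μ * ε₃ / 10) * μ⁻¹ := by
        have h4 : (0:ℝ) ≤ μ⁻¹ := inv_nonneg.2 hμ.le
        nlinarith
    _ = 4 * ε₃ / 5 := by
        field_simp
        ring

end SebMain

theorem stmt_10 (n m : ℕ) (hm : 1 ≤ m) (c : Fin m → EuclideanSpace ℝ (Fin n))
    (r : Fin m → ℝ) (hr : ∀ i, 0 ≤ r i) (ε₃ μ : ℝ)
    (hε₃ : 0 < ε₃) (hε₃1 : ε₃ ≤ 1) (hμ : 0 < μ) (hμ1 : μ ≤ 1)
    (x : EuclideanSpace ℝ (Fin n)) :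
    ‖Matrix.toEuclideanCLM (𝕜 := ℝ)
        (sebHess c r μ x - sebHessT c r μ (μ * ε₃ / (10 * m)) x)‖ ≤ 4 * ε₃ / 5 :=
  seb_hess_trunc_bound n m hm c r ε₃ μ hε₃ hε₃1 hμ hμ1 x
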